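/- Let ν be a Borel probability measure on ℝ whose support is contained in [0, B] for some real B ≥ 1, with mean ∫ s dν(s) = 1. Define g(u) = (u−1)·∫ s/(u−s) dν(s) for u ∈ (B, ∞). Then g is differentiable on (B, ∞) with derivative g'(u) = ∫ s(1−s)/(u−s)² dν(s), and g'(u) ≤ 0 for every u > B. -/

import Mathlib

open MeasureTheory Set

set_option maxHeartbeats 1000000

/-- Differentiability and derivative sign of the normalized GIC increment function: if
`ν` is a Borel probability measure supported in `[0, B]` (`B ≥ 1`) with mean `1`, then
`g(u) = (u-1) ∫ s/(u-s) dν(s)` is differentiable on `(B, ∞)` with derivative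
`g'(u) = ∫ s(1-s)/(u-s)² dν(s) ≤ 0`. -/
theorem stmt6 (B : ℝ) (hB : 1 ≤ B) (ν : Measure ℝ) [IsProbabilityMeasure ν]
    (hsupp : ν (Set.Icc (0 : ℝ) B)ᶜ = 0)
    (hmean : (∫ s, s ∂ν) = 1)
    (g : ℝ → ℝ) (hg : ∀ u : ℝ, g u = (u - 1) * ∫ s, s / (u - s) ∂ν) :
    ∀ u : ℝ, B < u →
      HasDerivAt g (∫ s, s * (1 - s) / (u - s) ^ 2 ∂ν) u ∧
      (∫ s, s * (1 - s) / (u - s) ^ 2 ∂ν) ≤ 0 := by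
  have hae : ∀ᵐ a ∂ν, a ∈ Set.Icc (0 : ℝ) B := by
    rw [MeasureTheory.ae_iff]
    exact hsupp
  intro u hu
  set ε : ℝ := (u - B) / 2 with hε
  have hεpos : 0 < ε := by rw [hε]; linarith
  have hball : ∀ x ∈ Metric.ball u ε, ∀ a ∈ Set.Icc (0 : ℝ) B, ε ≤ x - a := by
    intro x hx a ha
    have hx' : |x - u| < ε := by simpa [Metric.mem_ball, Real.dist_eq] using hx
    have h1 : u - ε < x := by linarith [(abs_lt.1 hx').1]
    have h2 : a ≤ B := ha.2
    have huB : u - ε - B = ε := by rw [hε]; ring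
    linarith
  have hBpos : (0:ℝ) ≤ B := by linarith
  -- integrability of bounded-a.e. measurable functions
  have int_of_bdd : ∀ (f : ℝ → ℝ), AEStronglyMeasurable f ν → ∀ C : ℝ,
      (∀ᵐ a ∂ν, ‖f a‖ ≤ C) → Integrable f ν := by
    intro f hf C hC
    exact ⟨hf, MeasureTheory.HasFiniteIntegral.of_bounded hC⟩
  have hC1 : ∀ᵐ a ∂ν, ‖a / (u - a)‖ ≤ B / ε := by
    filter_upwards [hae] with a ha
    have h1 : ε ≤ u - a := hball u (Metric.mem_ball_self hεpos) a ha
    have h2 : 0 < u - a := lt_of_lt_of_le hεpos h1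
    rw [Real.norm_eq_abs, abs_div, abs_of_nonneg ha.1, abs_of_pos h2]
    exact div_le_div₀ hBpos ha.2 hεpos h1
  have hint1 : Integrable (fun a : ℝ => a / (u - a)) ν :=
    int_of_bdd _ (measurable_id'.div (measurable_const.sub measurable_id)).aestronglyMeasurable _ hC1
  have hint_id : Integrable (fun a : ℝ => a) ν := by
    apply int_of_bdd _ measurable_id'.aestronglyMeasurable B
    filter_upwards [hae] with a ha
    rw [Real.norm_eq_abs, abs_of_nonneg ha.1]; exact ha.2
  -- the dominated derivative theorem
  have key := hasDerivAt_integral_of_dominated_loc_of_deriv_le (μ := ν)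
    (F := fun x a => a / (x - a)) (F' := fun x a => -a / (x - a) ^ 2)
    (bound := fun _ => B / ε ^ 2) (Metric.ball_mem_nhds u hεpos)
    (Filter.Eventually.of_forall fun x =>
      (measurable_id'.div (measurable_const.sub measurable_id)).aestronglyMeasurable) hint1
    ((measurable_id'.neg.div ((measurable_const.sub measurable_id).pow measurable_const)).aestronglyMeasurable)
    ?_ (integrable_const _) ?_
  · obtain ⟨hint2, hderiv⟩ := key
    have hprod : HasDerivAt (fun x => (x - 1) * ∫ a, a / (x - a) ∂ν)
        (1 * (∫ a, a / (u - a) ∂ν) + (u - 1) * ∫ a, -a / (u - a) ^ 2 ∂ν) u :=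
      ((hasDerivAt_id u).sub_const 1).mul hderiv
    have heq : (1:ℝ) * (∫ a, a / (u - a) ∂ν) + (u - 1) * ∫ a, -a / (u - a) ^ 2 ∂ν
        = ∫ a, a * (1 - a) / (u - a) ^ 2 ∂ν := by
      rw [one_mul, ← MeasureTheory.integral_const_mul]
      rw [← MeasureTheory.integral_add hint1 (hint2.const_mul (u - 1))]
      apply MeasureTheory.integral_congr_ae
      filter_upwards [hae] with a ha
      have h1 : ε ≤ u - a := hball u (Metric.mem_ball_self hεpos) a ha
      have h2 : (u - a) ≠ 0 := ne_of_gt (lt_of_lt_of_le hεpos h1)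
      field_simp
      ring
    have hgderiv : HasDerivAt g (∫ a, a * (1 - a) / (u - a) ^ 2 ∂ν) u := by
      rw [← heq]
      exact hprod.congr_of_eventuallyEq (Filter.Eventually.of_forall fun x => hg x)
    refine ⟨hgderiv, ?_⟩
    -- sign: pointwise a.e. comparison with the linear function (1-a)/(u-1)^2
    have hu1 : (0:ℝ) < u - 1 := by linarith
    have hptwise : ∀ᵐ a ∂ν, a * (1 - a) / (u - a) ^ 2 ≤ 1 / (u - 1) ^ 2 * (1 - a) := by
      filter_upwards [hae] with a ha
      have h1 : ε ≤ u - a := hball u (Metric.mem_ball_self hεpos) a ha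
      have h2 : 0 < u - a := lt_of_lt_of_le hεpos h1
      have key2 : 0 ≤ (a - 1) * (a * (u - 1) ^ 2 - (u - a) ^ 2) := by
        nlinarith [mul_nonneg (sq_nonneg (a - 1))
          (by nlinarith [ha.1, ha.2] : (0:ℝ) ≤ (u - 1) ^ 2 + (2 * u - a - 1))]
      have hrw : 1 / (u - 1) ^ 2 * (1 - a) - a * (1 - a) / (u - a) ^ 2
          = ((a - 1) * (a * (u - 1) ^ 2 - (u - a) ^ 2)) / ((u - a) ^ 2 * (u - 1) ^ 2) := by
        field_simp
        ring
      have : 0 ≤ 1 / (u - 1) ^ 2 * (1 - a) - a * (1 - a) / (u - a) ^ 2 := by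
        rw [hrw]
        exact div_nonneg key2 (by positivity)
      linarith
    have hintlin : Integrable (fun a : ℝ => 1 / (u - 1) ^ 2 * (1 - a)) ν :=
      ((integrable_const (1:ℝ)).sub hint_id).const_mul _
    have hintphi : Integrable (fun a : ℝ => a * (1 - a) / (u - a) ^ 2) ν := by
      apply int_of_bdd _ ((measurable_id'.mul (measurable_const.sub measurable_id)).div
        ((measurable_const.sub measurable_id).pow measurable_const)).aestronglyMeasurable
        (B * (1 + B) / ε ^ 2)
      filter_upwards [hae] with a ha
      show ‖a * (1 - a) / (u - a) ^ 2‖ ≤ B * (1 + B) / ε ^ 2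
      have h1 : ε ≤ u - a := hball u (Metric.mem_ball_self hεpos) a ha
      have h2 : 0 < u - a := lt_of_lt_of_le hεpos h1
      have h3 : |1 - a| ≤ 1 + B := abs_le.2 ⟨by linarith [ha.2], by linarith [ha.1]⟩
      rw [Real.norm_eq_abs, abs_div, abs_mul, abs_of_nonneg ha.1, abs_of_pos (pow_pos h2 2)]
      exact div_le_div₀ (by positivity)
        (mul_le_mul ha.2 h3 (abs_nonneg _) hBpos) (by positivity) (by nlinarith)
    calc (∫ a, a * (1 - a) / (u - a) ^ 2 ∂ν) ≤ ∫ a, 1 / (u - 1) ^ 2 * (1 - a) ∂ν :=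
          MeasureTheory.integral_mono_ae hintphi hintlin hptwise
      _ = 0 := by
          rw [MeasureTheory.integral_const_mul,
            MeasureTheory.integral_sub (integrable_const 1) hint_id, hmean]
          simp
  · -- bound on derivative
    filter_upwards [hae] with a ha x hx
    have h1 : ε ≤ x - a := hball x hx a ha
    have h2 : 0 < x - a := lt_of_lt_of_le hεpos h1
    rw [Real.norm_eq_abs, abs_div, abs_neg, abs_of_nonneg ha.1, abs_of_pos (pow_pos h2 2)]
    exact div_le_div₀ hBpos ha.2 (by positivity) (by nlinarith)
  · -- a.e. differentiability
    filter_upwards [hae] with a ha x hx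
    have h1 : ε ≤ x - a := hball x hx a ha
    have h2 : (x - a) ≠ 0 := ne_of_gt (lt_of_lt_of_le hεpos h1)
    have h := (((hasDerivAt_id x).sub_const a).inv h2).const_mul a
    have heq2 : a * (-1 / (x - a) ^ 2) = -a / (x - a) ^ 2 := by ring
    have heqf : (fun y : ℝ => a * (y - a)⁻¹) = fun y => a / (y - a) := by
      funext y; rw [div_eq_mul_inv]
    simp only [id_eq, Pi.inv_apply] at h
    rw [heqf, heq2] at h
    exact h
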